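/- Fix an index α. Let a_{ij} (i ≠ j) be smooth functions on Ω satisfying the semihamiltonian conditions ∂_k a_{ij} = a_{ik} a_{kj} + a_{ij} a_{jk} − a_{ij} a_{ik} for all pairwise distinct i, j, k. Let h be a smooth solution of ∂_i ∂_j h = a_{ij} ∂_i h + a_{ji} ∂_j h (i ≠ j) such that h, ∂_α h and 1 − a_{iα} h/∂_α h (for every i ≠ α) are nonvanishing. Define A_{αi} = (1 − a_{iα} h/∂_α h)·(∂_i h/h) for i ≠ α, and A_{ij} = a_{ij} + ∂_j ln(1 − a_{iα} h/∂_α h) for i ≠ α and any j ≠ i (where ∂_j ln w means ∂_j w/w). Then for every smooth solution u of ∂_i ∂_j u = a_{ij} ∂_i u + a_{ji} ∂_j u (i ≠ j), the Lévy transform U = u − (h/∂_α h)·∂_α u satisfies ∂_i ∂_j U = A_{ij} ∂_i U + A_{ji} ∂_j U for all i ≠ j. -/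

import Mathlib

/-- Partial derivative with respect to the `i`-th coordinate. -/
noncomputable def pd {n : ℕ} {F : Type*} [NormedAddCommGroup F] [NormedSpace ℝ F]
    (i : Fin n) (w : (Fin n → ℝ) → F) : (Fin n → ℝ) → F :=
  fun p => fderiv ℝ w p (Pi.single i 1)

open Filter Topology

section calc_lemmas
variable {n : ℕ} {i j : Fin n} {f g : (Fin n → ℝ) → ℝ} {p : Fin n → ℝ}

lemma pd_congr_nhds (h : f =ᶠ[𝓝 p] g) : pd i f p = pd i g p := by
  unfold pd; rw [h.fderiv_eq]

lemma pd_sub (hf : DifferentiableAt ℝ f p) (hg : DifferentiableAt ℝ g p) :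
    pd i (fun x => f x - g x) p = pd i f p - pd i g p := by
  simp [pd, fderiv_fun_sub hf hg]

lemma pd_mul (hf : DifferentiableAt ℝ f p) (hg : DifferentiableAt ℝ g p) :
    pd i (fun x => f x * g x) p = f p * pd i g p + g p * pd i f p := by
  simp [pd, fderiv_fun_mul hf hg]

lemma pd_inv (hg : DifferentiableAt ℝ g p) (h0 : g p ≠ 0) :
    pd i (fun x => (g x)⁻¹) p = -(pd i g p / g p ^ 2) := by
  have : (fun x => (g x)⁻¹) = Inv.inv ∘ g := rfl
  unfold pd
  rw [this, fderiv_comp p (differentiableAt_inv h0) hg]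
  rw [fderiv_inv' h0]
  simp only [ContinuousLinearMap.comp_apply, ContinuousLinearMap.neg_apply,
    ContinuousLinearMap.mulLeftRight_apply]
  rw [div_eq_mul_inv, pow_two, mul_inv]
  ring

lemma pd_div (hf : DifferentiableAt ℝ f p) (hg : DifferentiableAt ℝ g p) (h0 : g p ≠ 0) :
    pd i (fun x => f x / g x) p = (pd i f p * g p - f p * pd i g p) / g p ^ 2 := by
  have e : (fun x => f x / g x) = fun x => f x * (g x)⁻¹ := by
    funext x; rw [div_eq_mul_inv]
  rw [e, pd_mul hf (hg.fun_inv h0), pd_inv hg h0]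
  field_simp
  ring

lemma pd_const (c : ℝ) : pd i (fun _ => c) p = 0 := by
  simp [pd]

lemma diffAt_div (hf : DifferentiableAt ℝ f p) (hg : DifferentiableAt ℝ g p)
    (h0 : g p ≠ 0) : DifferentiableAt ℝ (fun x => f x / g x) p := by
  simp only [div_eq_mul_inv]
  exact hf.mul (hg.inv h0)

lemma pd_one_sub (hg : DifferentiableAt ℝ g p) :
    pd i (fun x => 1 - g x) p = -pd i g p := by
  have h1 : DifferentiableAt ℝ (fun _ : Fin n → ℝ => (1 : ℝ)) p := differentiableAt_const 1
  have := pd_sub (i := i) h1 hg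
  simpa [pd_const] using this

lemma contDiffAt_pd (hf : ContDiffAt ℝ (⊤ : ℕ∞) f p) :
    ContDiffAt ℝ (⊤ : ℕ∞) (pd i f) p := by
  have h1 : ContDiffAt ℝ (⊤ : ℕ∞) (fderiv ℝ f) p := hf.fderiv_right (by norm_cast)
  exact h1.clm_apply contDiffAt_const

lemma pd_symm (hf : ContDiffAt ℝ (⊤ : ℕ∞) f p) :
    pd i (pd j f) p = pd j (pd i f) p := by
  have hs : IsSymmSndFDerivAt ℝ f p := hf.isSymmSndFDerivAt (by rw [minSmoothness_of_isRCLikeNormedField]; norm_cast)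
  have hd : DifferentiableAt ℝ (fderiv ℝ f) p :=
    (hf.fderiv_right (by norm_cast : (1:WithTop ℕ∞) + 1 ≤ ((⊤:ℕ∞):WithTop ℕ∞))).differentiableAt
      (by norm_cast)
  have key : ∀ (k : Fin n) (v : Fin n → ℝ), pd k (fun x => fderiv ℝ f x v) p
      = fderiv ℝ (fderiv ℝ f) p (Pi.single k 1) v := by
    intro k v
    unfold pd
    rw [fderiv_clm_apply hd (differentiableAt_const v)]
    simp
  show pd i (fun x => fderiv ℝ f x (Pi.single j 1)) p
      = pd j (fun x => fderiv ℝ f x (Pi.single i 1)) p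
  rw [key, key, hs.eq]

end calc_lemmas

set_option maxHeartbeats 4000000 in
/-- the Lévy transform `U = u − (h/∂_α h)∂_α u` of any solution `u` of
`∂_i∂_j u = a_{ij}∂_i u + a_{ji}∂_j u` satisfies the same system with the transformed
coefficients `A = L_α(a)`. -/
theorem stmt10 {n : ℕ} (Ω : Set (Fin n → ℝ)) (hΩ : IsOpen Ω) (α : Fin n)
    (a : Fin n → Fin n → (Fin n → ℝ) → ℝ)
    (hasm : ∀ i j, i ≠ j → ContDiffOn ℝ (⊤ : ℕ∞) (a i j) Ω)
    (hsemi : ∀ i j k, i ≠ j → j ≠ k → i ≠ k → ∀ p ∈ Ω,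
      pd k (a i j) p = a i k p * a k j p + a i j p * a j k p - a i j p * a i k p)
    (h : (Fin n → ℝ) → ℝ) (hhsm : ContDiffOn ℝ (⊤ : ℕ∞) h Ω)
    (hheq : ∀ i j, i ≠ j → ∀ p ∈ Ω,
      pd i (pd j h) p = a i j p * pd i h p + a j i p * pd j h p)
    (hh0 : ∀ p ∈ Ω, h p ≠ 0)
    (hdh0 : ∀ p ∈ Ω, pd α h p ≠ 0)
    (hw0 : ∀ i, i ≠ α → ∀ p ∈ Ω, 1 - a i α p * h p / pd α h p ≠ 0)
    (A : Fin n → Fin n → (Fin n → ℝ) → ℝ)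
    (hAα : ∀ i, i ≠ α → ∀ p,
      A α i p = (1 - a i α p * h p / pd α h p) * (pd i h p / h p))
    (hAi : ∀ i j, i ≠ α → j ≠ i → ∀ p,
      A i j p = a i j p
        + pd j (fun x => 1 - a i α x * h x / pd α h x) p
            / (1 - a i α p * h p / pd α h p)) :
    ∀ u : (Fin n → ℝ) → ℝ, ContDiffOn ℝ (⊤ : ℕ∞) u Ω →
      (∀ i j, i ≠ j → ∀ p ∈ Ω,
        pd i (pd j u) p = a i j p * pd i u p + a j i p * pd j u p) →
      ∀ i j, i ≠ j → ∀ p ∈ Ω,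
        pd i (pd j (fun x => u x - (h x / pd α h x) * pd α u x)) p
          = A i j p * pd i (fun x => u x - (h x / pd α h x) * pd α u x) p
            + A j i p * pd j (fun x => u x - (h x / pd α h x) * pd α u x) p := by
  intro u husm hueq
  have memΩ : ∀ q ∈ Ω, Ω ∈ 𝓝 q := fun q hq => hΩ.mem_nhds hq
  have smh' : ∀ q ∈ Ω, ContDiffAt ℝ (⊤ : ℕ∞) h q := fun q hq => hhsm.contDiffAt (memΩ q hq)
  have smu' : ∀ q ∈ Ω, ContDiffAt ℝ (⊤ : ℕ∞) u q := fun q hq => husm.contDiffAt (memΩ q hq)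
  have sma' : ∀ i j, i ≠ j → ∀ q ∈ Ω, ContDiffAt ℝ (⊤ : ℕ∞) (a i j) q :=
    fun i j hij q hq => (hasm i j hij).contDiffAt (memΩ q hq)
  have dhq : ∀ q ∈ Ω, DifferentiableAt ℝ h q :=
    fun q hq => (smh' q hq).differentiableAt (by norm_cast)
  have duq : ∀ q ∈ Ω, DifferentiableAt ℝ u q :=
    fun q hq => (smu' q hq).differentiableAt (by norm_cast)
  have daq : ∀ i j, i ≠ j → ∀ q ∈ Ω, DifferentiableAt ℝ (a i j) q :=
    fun i j hij q hq => (sma' i j hij q hq).differentiableAt (by norm_cast)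
  have dphk : ∀ (k : Fin n), ∀ q ∈ Ω, DifferentiableAt ℝ (pd k h) q :=
    fun k q hq => (contDiffAt_pd (smh' q hq)).differentiableAt (by norm_cast)
  have dpuk : ∀ (k : Fin n), ∀ q ∈ Ω, DifferentiableAt ℝ (pd k u) q :=
    fun k q hq => (contDiffAt_pd (smu' q hq)).differentiableAt (by norm_cast)
  have dgq : ∀ q ∈ Ω, DifferentiableAt ℝ (pd α h) q := dphk α
  -- Step A : first derivative of the Lévy transform in a direction k ≠ α
  have stepA : ∀ k, k ≠ α → ∀ q ∈ Ω,
      pd k (fun x => u x - h x / pd α h x * pd α u x) q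
        = (1 - a k α q * h q / pd α h q)
            * (pd k u q - pd k h q / pd α h q * pd α u q) := by
    intro k hk q hq
    have d1 : DifferentiableAt ℝ (fun x => h x / pd α h x) q :=
      diffAt_div (dhq q hq) (dgq q hq) (hdh0 q hq)
    rw [pd_sub (duq q hq) (d1.fun_mul (dpuk α q hq)), pd_mul d1 (dpuk α q hq),
      pd_div (dhq q hq) (dgq q hq) (hdh0 q hq),
      hheq k α hk q hq, hueq k α hk q hq]
    have hg := hdh0 q hq
    field_simp
    ring
  -- the main case: second derivative ∂_α ∂_k U for k ≠ α
  have caseα : ∀ k, k ≠ α → ∀ q ∈ Ω,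
      pd α (pd k (fun x => u x - h x / pd α h x * pd α u x)) q
        = A α k q * pd α (fun x => u x - h x / pd α h x * pd α u x) q
          + A k α q * pd k (fun x => u x - h x / pd α h x * pd α u x) q := by
    intro k hk q hq
    have hg := hdh0 q hq
    have hh := hh0 q hq
    have hw := hw0 k hk q hq
    have hw' : pd α h q - a k α q * h q ≠ 0 := by
      have e : pd α h q - a k α q * h q
          = (1 - a k α q * h q / pd α h q) * pd α h q := by field_simp
      rw [e]; exact mul_ne_zero hw hg
    have hev : pd k (fun x => u x - h x / pd α h x * pd α u x) =ᶠ[𝓝 q]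
        (fun x => (1 - a k α x * h x / pd α h x)
          * (pd k u x - pd k h x / pd α h x * pd α u x)) :=
      Filter.eventuallyEq_of_mem (memΩ q hq) (fun x hx => stepA k hk x hx)
    have dW : DifferentiableAt ℝ (fun x => 1 - a k α x * h x / pd α h x) q :=
      (differentiableAt_const 1).sub
        (diffAt_div ((daq k α hk q hq).mul (dhq q hq)) (dgq q hq) hg)
    have dPH : DifferentiableAt ℝ (fun x => pd k h x / pd α h x) q :=
      diffAt_div (dphk k q hq) (dgq q hq) hg
    have dV : DifferentiableAt ℝ
        (fun x => pd k u x - pd k h x / pd α h x * pd α u x) q :=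
      (dpuk k q hq).sub (dPH.mul (dpuk α q hq))
    have dHG : DifferentiableAt ℝ (fun x => h x / pd α h x) q :=
      diffAt_div (dhq q hq) (dgq q hq) hg
    rw [pd_congr_nhds hev, pd_mul dW dV,
      pd_sub (dpuk k q hq) (dPH.fun_mul (dpuk α q hq)),
      pd_mul dPH (dpuk α q hq),
      pd_div (dphk k q hq) (dgq q hq) hg,
      hAα k hk q, hAi k α hk (Ne.symm hk) q,
      stepA k hk q hq,
      pd_sub (duq q hq) (dHG.fun_mul (dpuk α q hq)),
      pd_mul dHG (dpuk α q hq),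
      pd_div (dhq q hq) (dgq q hq) hg,
      hueq α k (Ne.symm hk) q hq, hheq α k (Ne.symm hk) q hq]
    field_simp
    ring
  -- the case i ≠ α, j ≠ α
  have case1 : ∀ i j, i ≠ α → j ≠ α → i ≠ j → ∀ q ∈ Ω,
      pd i (pd j (fun x => u x - h x / pd α h x * pd α u x)) q
        = A i j q * pd i (fun x => u x - h x / pd α h x * pd α u x) q
          + A j i q * pd j (fun x => u x - h x / pd α h x * pd α u x) q := by
    intro i j hiα hjα hij q hq
    have hg := hdh0 q hq
    have hh := hh0 q hq
    have hwi := hw0 i hiα q hq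
    have hwj := hw0 j hjα q hq
    have hwi' : pd α h q - a i α q * h q ≠ 0 := by
      have e : pd α h q - a i α q * h q
          = (1 - a i α q * h q / pd α h q) * pd α h q := by field_simp
      rw [e]; exact mul_ne_zero hwi hg
    have hwj' : pd α h q - a j α q * h q ≠ 0 := by
      have e : pd α h q - a j α q * h q
          = (1 - a j α q * h q / pd α h q) * pd α h q := by field_simp
      rw [e]; exact mul_ne_zero hwj hg
    have hev : pd j (fun x => u x - h x / pd α h x * pd α u x) =ᶠ[𝓝 q]
        (fun x => (1 - a j α x * h x / pd α h x)
          * (pd j u x - pd j h x / pd α h x * pd α u x)) :=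
      Filter.eventuallyEq_of_mem (memΩ q hq) (fun x hx => stepA j hjα x hx)
    have dWj : DifferentiableAt ℝ (fun x => 1 - a j α x * h x / pd α h x) q :=
      (differentiableAt_const 1).sub
        (diffAt_div ((daq j α hjα q hq).mul (dhq q hq)) (dgq q hq) hg)
    have dPHj : DifferentiableAt ℝ (fun x => pd j h x / pd α h x) q :=
      diffAt_div (dphk j q hq) (dgq q hq) hg
    have dVj : DifferentiableAt ℝ
        (fun x => pd j u x - pd j h x / pd α h x * pd α u x) q :=
      (dpuk j q hq).sub (dPHj.mul (dpuk α q hq))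
    rw [pd_congr_nhds hev, pd_mul dWj dVj,
      hAi i j hiα (Ne.symm hij) q, hAi j i hjα hij q,
      stepA i hiα q hq, stepA j hjα q hq,
      pd_sub (dpuk j q hq) (dPHj.fun_mul (dpuk α q hq)),
      pd_mul dPHj (dpuk α q hq),
      pd_div (dphk j q hq) (dgq q hq) hg,
      pd_one_sub (diffAt_div ((daq j α hjα q hq).fun_mul (dhq q hq)) (dgq q hq) hg),
      pd_div ((daq j α hjα q hq).fun_mul (dhq q hq)) (dgq q hq) hg,
      pd_mul (daq j α hjα q hq) (dhq q hq),
      pd_one_sub (diffAt_div ((daq i α hiα q hq).fun_mul (dhq q hq)) (dgq q hq) hg),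
      pd_div ((daq i α hiα q hq).fun_mul (dhq q hq)) (dgq q hq) hg,
      pd_mul (daq i α hiα q hq) (dhq q hq),
      hueq i j hij q hq, hueq i α hiα q hq,
      hheq i j hij q hq, hheq i α hiα q hq, hheq j α hjα q hq,
      hsemi j α i hjα (Ne.symm hiα) (Ne.symm hij) q hq,
      hsemi i α j hiα (Ne.symm hjα) hij q hq]
    have hwi'' : pd α h q - h q * a i α q ≠ 0 := by rw [mul_comm (h q)]; exact hwi'
    field_simp
    ring
  -- now the full statement
  intro i j hij p hp
  by_cases hiα : i = α
  · subst hiα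
    exact caseα j (fun hjα => hij hjα.symm) p hp
  · by_cases hjα : j = α
    · rw [hjα]
      have smU : ContDiffAt ℝ (⊤ : ℕ∞)
          (fun x => u x - h x / pd α h x * pd α u x) p :=
        (smu' p hp).sub (((smh' p hp).div (contDiffAt_pd (smh' p hp)) (hdh0 p hp)).mul
          (contDiffAt_pd (smu' p hp)))
      rw [pd_symm smU, caseα i hiα p hp]
      ring
    · exact case1 i j hiα hjα hij p hp
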